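/- Let L and X be as above (graph on vertex set L). Then X is a weakly modular graph. -/

import Mathlib

open SimpleGraph

/-- The graph `X` on the vertex set `L`, with an edge between `x` and `y` iff
`x ≤ y ≤ x + 1` or `y ≤ x ≤ y + 1`, where `x + 1 = T x` for the order automorphism `T`
generating the `ℤ`-action. -/
def stepGraph {L : Type*} [Lattice L] (T : L ≃o L) : SimpleGraph L where
  Adj x y := x ≠ y ∧ ((x ≤ y ∧ y ≤ T x) ∨ (y ≤ x ∧ x ≤ T y))
  symm := ⟨by rintro x y ⟨hne, h⟩; exact ⟨hne.symm, h.symm⟩⟩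
  loopless := ⟨by rintro x ⟨hne, -⟩; exact hne rfl⟩

namespace StepGraphAux

variable {L : Type*} [Lattice L]

/-- `T^(j+k) x = T^j (T^k x)`. -/
lemma pow_apply_add (T : L ≃o L) (j k : ℕ) (x : L) :
    (T ^ (j + k)) x = (T ^ j) ((T ^ k) x) := by
  rw [pow_add]; rfl

lemma pow_succ_apply (T : L ≃o L) (k : ℕ) (x : L) :
    (T ^ (k + 1)) x = (T ^ k) (T x) := by
  rw [pow_succ]; rfl

lemma pow_succ_apply' (T : L ≃o L) (k : ℕ) (x : L) :
    (T ^ (k + 1)) x = T ((T ^ k) x) := by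
  rw [pow_succ']; rfl

lemma pow_mono (T : L ≃o L) (k : ℕ) {a b : L} (h : a ≤ b) : (T ^ k) a ≤ (T ^ k) b :=
  (T ^ k).le_iff_le.mpr h

lemma le_pow_self (T : L ≃o L) (hinc : ∀ x : L, x < T x) (k : ℕ) (x : L) :
    x ≤ (T ^ k) x := by
  induction k with
  | zero => simp
  | succ k ih =>
      rw [pow_succ_apply']
      exact ih.trans (le_of_lt (hinc _))

/-- `rr T x y` is the least `k` with `y ≤ T^k x`. -/
noncomputable def rr (T : L ≃o L) (x y : L) : ℕ := sInf {k : ℕ | y ≤ (T ^ k) x}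

lemma rr_le (T : L ≃o L) {x y : L} {k : ℕ} (h : y ≤ (T ^ k) x) : rr T x y ≤ k :=
  Nat.sInf_le h

lemma le_pow_rr (T : L ≃o L)
    (hcof : ∀ x y : L, ∃ k : ℕ, (T ^ (k : ℤ))⁻¹ x ≤ y ∧ y ≤ (T ^ (k : ℤ)) x)
    (x y : L) : y ≤ (T ^ rr T x y) x := by
  obtain ⟨k, -, hk⟩ := hcof x y
  rw [zpow_natCast] at hk
  have hne : {k : ℕ | y ≤ (T ^ k) x}.Nonempty := ⟨k, hk⟩
  exact Nat.sInf_mem hne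

section Main

variable (T : L ≃o L) (hinc : ∀ x : L, x < T x)
  (hcof : ∀ x y : L, ∃ k : ℕ, (T ^ (k : ℤ))⁻¹ x ≤ y ∧ y ≤ (T ^ (k : ℤ)) x)

include hinc hcof
set_option linter.unusedSectionVars false

/-- An increasing walk: if `x ≤ w ≤ T^k x` then there is a walk from `x` to `w`
of length at most `k`. -/
lemma exists_walk_up (k : ℕ) : ∀ w : L, ∀ x : L, x ≤ w → w ≤ (T ^ k) x →
    ∃ p : (stepGraph T).Walk x w, p.length ≤ k := by
  induction k with
  | zero =>
      intro w x h1 h2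
      have hw : w = x := le_antisymm (by simpa using h2) h1
      subst hw
      exact ⟨SimpleGraph.Walk.nil, by simp⟩
  | succ k ih =>
      intro w x h1 h2
      have hx : x ≤ w ⊓ (T ^ k) x := le_inf h1 (le_pow_self T hinc k x)
      obtain ⟨p, hp⟩ := ih (w ⊓ (T ^ k) x) x hx inf_le_right
      by_cases h : w ⊓ (T ^ k) x = w
      · exact ⟨p.copy rfl h, by rw [SimpleGraph.Walk.length_copy]; omega⟩
      · have hadj : (stepGraph T).Adj (w ⊓ (T ^ k) x) w := by
          refine ⟨h, Or.inl ⟨inf_le_left, ?_⟩⟩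
          rw [OrderIso.map_inf]
          refine le_inf (le_of_lt (hinc w)) ?_
          rw [← pow_succ_apply']
          exact h2
        exact ⟨p.concat hadj, by rw [SimpleGraph.Walk.length_concat]; omega⟩

/-- Every walk from `a` to `b` of length `m + k` witnesses `b ≤ T^m a` and `a ≤ T^k b`. -/
lemma walk_count {a b : L} (p : (stepGraph T).Walk a b) :
    ∃ m k : ℕ, m + k = p.length ∧ b ≤ (T ^ m) a ∧ a ≤ (T ^ k) b := by
  induction p with
  | nil => exact ⟨0, 0, by simp, by simp, by simp⟩
  | @cons a c b h p ih =>
      obtain ⟨m, k, hs, h1, h2⟩ := ih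
      rcases h.2 with ⟨hac, hca⟩ | ⟨hca, hac⟩
      · refine ⟨m + 1, k, by rw [SimpleGraph.Walk.length_cons]; omega, ?_, hac.trans h2⟩
        rw [pow_succ_apply]
        exact h1.trans (pow_mono T m hca)
      · refine ⟨m, k + 1, by rw [SimpleGraph.Walk.length_cons]; omega,
          h1.trans (pow_mono T m hca), ?_⟩
        rw [pow_succ_apply']
        exact hac.trans (T.le_iff_le.mpr h2)

lemma exists_short_walk (x y : L) :
    ∃ p : (stepGraph T).Walk x y, p.length ≤ rr T x y + rr T y x := by
  obtain ⟨p1, hp1⟩ := exists_walk_up T hinc hcof (rr T x y) (x ⊔ y) x le_sup_left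
    (sup_le (le_pow_self T hinc _ x) (le_pow_rr T hcof x y))
  obtain ⟨p2, hp2⟩ := exists_walk_up T hinc hcof (rr T y x) (x ⊔ y) y le_sup_right
    (sup_le (le_pow_rr T hcof y x) (le_pow_self T hinc _ y))
  refine ⟨p1.append p2.reverse, ?_⟩
  rw [SimpleGraph.Walk.length_append, SimpleGraph.Walk.length_reverse]
  omega

lemma step_reachable (x y : L) : (stepGraph T).Reachable x y :=
  ⟨(exists_short_walk T hinc hcof x y).choose⟩

/-- The distance formula. -/
lemma dist_eq (x y : L) : (stepGraph T).dist x y = rr T x y + rr T y x := by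
  apply le_antisymm
  · obtain ⟨p, hp⟩ := exists_short_walk T hinc hcof x y
    exact (SimpleGraph.dist_le p).trans hp
  · obtain ⟨p, hp⟩ := (step_reachable T hinc hcof x y).exists_walk_length_eq_dist
    obtain ⟨m, k, hs, h1, h2⟩ := walk_count T hinc hcof p
    have hm := rr_le T h1
    have hk := rr_le T h2
    omega

/-- Finishing lemma: from a candidate `u` at distance `≤ n - 1` that is comparable-adjacent
to `y` and `z`, produce the vertex required by weak modularity. -/
lemma finish (x y z u : L) (n : ℕ) (hn : 1 ≤ n)
    (hdy : (stepGraph T).dist x y = n) (hdz : (stepGraph T).dist x z = n)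
    (hdu : (stepGraph T).dist x u ≤ n - 1)
    (hy : (u ≤ y ∧ y ≤ T u) ∨ (y ≤ u ∧ u ≤ T y))
    (hz : (u ≤ z ∧ z ≤ T u) ∨ (z ≤ u ∧ u ≤ T z)) :
    ∃ v, (stepGraph T).dist x v = n - 1 ∧
      (stepGraph T).dist v y = 1 ∧ (stepGraph T).dist v z = 1 := by
  have hney : u ≠ y := by
    rintro rfl; omega
  have hnez : u ≠ z := by
    rintro rfl; omega
  have hadjy : (stepGraph T).Adj u y := ⟨hney, hy⟩
  have hadjz : (stepGraph T).Adj u z := ⟨hnez, hz⟩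
  have hge : n - 1 ≤ (stepGraph T).dist x u := by
    obtain ⟨p, hp⟩ := (step_reachable T hinc hcof x u).exists_walk_length_eq_dist
    have := SimpleGraph.dist_le (p.concat hadjy)
    rw [SimpleGraph.Walk.length_concat, hp, hdy] at this
    omega
  exact ⟨u, le_antisymm hdu hge, (SimpleGraph.dist_eq_one_iff_adj).mpr hadjy,
    (SimpleGraph.dist_eq_one_iff_adj).mpr hadjz⟩

/-- Meet construction: works when the common profile has `r ≥ 1`. -/
lemma constr_meet (x y z : L) (r s : ℕ)
    (hy : y ≤ (T ^ (r + 1)) x) (hz : z ≤ (T ^ (r + 1)) x)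
    (hsy : x ≤ (T ^ s) y) (hsz : x ≤ (T ^ s) z)
    (hyz : y ≤ T z) (hzy : z ≤ T y) :
    ∃ u, (stepGraph T).dist x u ≤ r + s ∧
      ((u ≤ y ∧ y ≤ T u) ∨ (y ≤ u ∧ u ≤ T y)) ∧
      ((u ≤ z ∧ z ≤ T u) ∨ (z ≤ u ∧ u ≤ T z)) := by
  refine ⟨y ⊓ z ⊓ (T ^ r) x, ?_, Or.inl ⟨inf_le_left.trans inf_le_left, ?_⟩,
    Or.inl ⟨inf_le_left.trans inf_le_right, ?_⟩⟩
  · rw [dist_eq T hinc hcof]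
    have h1 : rr T x (y ⊓ z ⊓ (T ^ r) x) ≤ r := rr_le T inf_le_right
    have h2 : rr T (y ⊓ z ⊓ (T ^ r) x) x ≤ s := by
      refine rr_le T ?_
      rw [OrderIso.map_inf, OrderIso.map_inf, ← pow_apply_add]
      exact le_inf (le_inf hsy hsz) (le_pow_self T hinc _ x)
    omega
  · rw [OrderIso.map_inf, OrderIso.map_inf, ← pow_succ_apply']
    exact le_inf (le_inf (le_of_lt (hinc y)) hyz) hy
  · rw [OrderIso.map_inf, OrderIso.map_inf, ← pow_succ_apply']
    exact le_inf (le_inf hzy (le_of_lt (hinc z))) hz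

/-- Join construction: works when the common profile has `s ≥ 1`. -/
lemma constr_join (x y z : L) (r s : ℕ)
    (hy : y ≤ (T ^ r) x) (hz : z ≤ (T ^ r) x)
    (hsy : x ≤ (T ^ (s + 1)) y) (hsz : x ≤ (T ^ (s + 1)) z)
    (hyz : y ≤ T z) (hzy : z ≤ T y) :
    ∃ u, (stepGraph T).dist x u ≤ r + s ∧
      ((u ≤ y ∧ y ≤ T u) ∨ (y ≤ u ∧ u ≤ T y)) ∧
      ((u ≤ z ∧ z ≤ T u) ∨ (z ≤ u ∧ u ≤ T z)) := by
  refine ⟨y ⊔ z ⊔ (T ^ s).symm x, ?_, Or.inr ⟨le_sup_left.trans le_sup_left, ?_⟩,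
    Or.inr ⟨le_sup_right.trans le_sup_left, ?_⟩⟩
  · rw [dist_eq T hinc hcof]
    have h1 : rr T x (y ⊔ z ⊔ (T ^ s).symm x) ≤ r := by
      refine rr_le T (sup_le (sup_le hy hz) ?_)
      rw [OrderIso.symm_apply_le, ← pow_apply_add]
      exact le_pow_self T hinc _ x
    have h2 : rr T (y ⊔ z ⊔ (T ^ s).symm x) x ≤ s := by
      refine rr_le T ?_
      calc x = (T ^ s) ((T ^ s).symm x) := ((T ^ s).apply_symm_apply x).symm
        _ ≤ (T ^ s) (y ⊔ z ⊔ (T ^ s).symm x) := pow_mono T s le_sup_right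
    omega
  · refine sup_le (sup_le (le_of_lt (hinc y)) hzy) ?_
    rw [OrderIso.symm_apply_le, ← pow_succ_apply]
    exact hsy
  · refine sup_le (sup_le hyz (le_of_lt (hinc z))) ?_
    rw [OrderIso.symm_apply_le, ← pow_succ_apply]
    exact hsz

/-- Middle construction: used for the triangle condition when profiles differ. -/
lemma constr_mid (x y z : L) (r s : ℕ)
    (hyr : y ≤ (T ^ r) x) (hyz : y ≤ z) (hz : z ≤ (T ^ (r + 1)) x)
    (hsz : x ≤ (T ^ s) z) (hzy : z ≤ T y) :
    ∃ u, (stepGraph T).dist x u ≤ r + s ∧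
      ((u ≤ y ∧ y ≤ T u) ∨ (y ≤ u ∧ u ≤ T y)) ∧
      ((u ≤ z ∧ z ≤ T u) ∨ (z ≤ u ∧ u ≤ T z)) := by
  refine ⟨z ⊓ (T ^ r) x, ?_, Or.inr ⟨le_inf hyz hyr, inf_le_left.trans hzy⟩,
    Or.inl ⟨inf_le_left, ?_⟩⟩
  · rw [dist_eq T hinc hcof]
    have h1 : rr T x (z ⊓ (T ^ r) x) ≤ r := rr_le T inf_le_right
    have h2 : rr T (z ⊓ (T ^ r) x) x ≤ s := by
      refine rr_le T ?_
      rw [OrderIso.map_inf, ← pow_apply_add]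
      exact le_inf hsz (le_pow_self T hinc _ x)
    omega
  · rw [OrderIso.map_inf, ← pow_succ_apply']
    exact le_inf (le_of_lt (hinc z)) hz

/-- Mixed construction: used for the quadrangle condition with one up and one down edge. -/
lemma constr_mixed (x y z : L) (r s : ℕ)
    (hyz : y ≤ z) (hyr : y ≤ (T ^ r) x) (hz : z ≤ (T ^ (r + 1)) x)
    (hsz : x ≤ (T ^ s) z) (hsy : x ≤ (T ^ (s + 1)) y) (hzT2 : z ≤ T (T y)) :
    ∃ u, (stepGraph T).dist x u ≤ r + s ∧
      ((u ≤ y ∧ y ≤ T u) ∨ (y ≤ u ∧ u ≤ T y)) ∧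
      ((u ≤ z ∧ z ≤ T u) ∨ (z ≤ u ∧ u ≤ T z)) := by
  refine ⟨z ⊓ T y ⊓ (T ^ r) x, ?_,
    Or.inr ⟨le_inf (le_inf hyz (le_of_lt (hinc y))) hyr, inf_le_left.trans inf_le_right⟩,
    Or.inl ⟨inf_le_left.trans inf_le_left, ?_⟩⟩
  · rw [dist_eq T hinc hcof]
    have h1 : rr T x (z ⊓ T y ⊓ (T ^ r) x) ≤ r := rr_le T inf_le_right
    have h2 : rr T (z ⊓ T y ⊓ (T ^ r) x) x ≤ s := by
      refine rr_le T ?_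
      rw [OrderIso.map_inf, OrderIso.map_inf, ← pow_apply_add]
      refine le_inf (le_inf hsz ?_) (le_pow_self T hinc _ x)
      rw [← pow_succ_apply]
      exact hsy
    omega
  · rw [OrderIso.map_inf, OrderIso.map_inf, ← pow_succ_apply']
    exact le_inf (le_inf (le_of_lt (hinc z)) hzT2) hz

/-- Weak modularity step when the two vertices have the same distance profile. -/
lemma same_profile (x y z : L) (n : ℕ) (hn : 2 ≤ n)
    (hdy : (stepGraph T).dist x y = n) (hdz : (stepGraph T).dist x z = n)
    (er : rr T x z = rr T x y) (es : rr T z x = rr T y x)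
    (hyz : y ≤ T z) (hzy : z ≤ T y) :
    ∃ v, (stepGraph T).dist x v = n - 1 ∧
      (stepGraph T).dist v y = 1 ∧ (stepGraph T).dist v z = 1 := by
  have e1 : rr T x y + rr T y x = n := by rw [← dist_eq T hinc hcof]; exact hdy
  have hry := le_pow_rr T hcof x y
  have hrz := le_pow_rr T hcof x z
  have hsy := le_pow_rr T hcof y x
  have hsz := le_pow_rr T hcof z x
  rw [er] at hrz
  rw [es] at hsz
  rcases Nat.eq_zero_or_pos (rr T x y) with h0 | hpos
  · -- r = 0, so s = n ≥ 2; use the join construction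
    obtain ⟨s', hs'⟩ : ∃ s', rr T y x = s' + 1 := ⟨n - 1, by omega⟩
    rw [hs'] at hsy hsz
    obtain ⟨u, hu, hu1, hu2⟩ := constr_join T hinc hcof x y z (rr T x y) s'
      hry hrz hsy hsz hyz hzy
    exact finish T hinc hcof x y z u n (by omega) hdy hdz (by omega) hu1 hu2
  · -- r ≥ 1; use the meet construction
    obtain ⟨r', hr'⟩ : ∃ r', rr T x y = r' + 1 := ⟨rr T x y - 1, by omega⟩
    rw [hr'] at hry hrz
    obtain ⟨u, hu, hu1, hu2⟩ := constr_meet T hinc hcof x y z r' (rr T y x)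
      hry hrz hsy hsz hyz hzy
    exact finish T hinc hcof x y z u n (by omega) hdy hdz (by omega) hu1 hu2

/-- Ordered triangle condition. -/
lemma triangle_ordered (x y z : L) (n : ℕ) (hn : 2 ≤ n)
    (hyz : y ≤ z) (hzy : z ≤ T y)
    (hdy : (stepGraph T).dist x y = n) (hdz : (stepGraph T).dist x z = n) :
    ∃ v, (stepGraph T).dist x v = n - 1 ∧
      (stepGraph T).dist v y = 1 ∧ (stepGraph T).dist v z = 1 := by
  have e1 : rr T x y + rr T y x = n := by rw [← dist_eq T hinc hcof]; exact hdy
  have e2 : rr T x z + rr T z x = n := by rw [← dist_eq T hinc hcof]; exact hdz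
  have hry := le_pow_rr T hcof x y
  have hrz := le_pow_rr T hcof x z
  have hsy := le_pow_rr T hcof y x
  have hsz := le_pow_rr T hcof z x
  have f1 : rr T x y ≤ rr T x z := rr_le T (hyz.trans hrz)
  have f2 : rr T x z ≤ rr T x y + 1 := by
    refine rr_le T (hzy.trans ?_)
    rw [pow_succ_apply']
    exact T.le_iff_le.mpr hry
  have f3 : rr T z x ≤ rr T y x := rr_le T (hsy.trans (pow_mono T _ hyz))
  by_cases hc : rr T x z = rr T x y + 1
  · -- profile shift: use the middle construction
    obtain ⟨u, hu, hu1, hu2⟩ := constr_mid T hinc hcof x y z (rr T x y) (rr T z x)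
      hry hyz (by rw [← hc]; exact hrz) hsz hzy
    exact finish T hinc hcof x y z u n (by omega) hdy hdz (by omega) hu1 hu2
  · have er : rr T x z = rr T x y := by omega
    have es : rr T z x = rr T y x := by omega
    exact same_profile T hinc hcof x y z n hn hdy hdz er es
      (hyz.trans (le_of_lt (hinc z))) hzy

/-- Ordered mixed quadrangle condition: `y ≤ t ≤ T y` and `t ≤ z ≤ T t`. -/
lemma quad_mixed (x y z t : L) (n : ℕ) (hn : 2 ≤ n)
    (hdy : (stepGraph T).dist x y = n) (hdz : (stepGraph T).dist x z = n)
    (hdt : (stepGraph T).dist x t = n + 1)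
    (hyt : y ≤ t) (hty : t ≤ T y) (htz : t ≤ z) (hzt : z ≤ T t) :
    ∃ v, (stepGraph T).dist x v = n - 1 ∧
      (stepGraph T).dist v y = 1 ∧ (stepGraph T).dist v z = 1 := by
  have e1 : rr T x y + rr T y x = n := by rw [← dist_eq T hinc hcof]; exact hdy
  have e2 : rr T x z + rr T z x = n := by rw [← dist_eq T hinc hcof]; exact hdz
  have e3 : rr T x t + rr T t x = n + 1 := by rw [← dist_eq T hinc hcof]; exact hdt
  have hry := le_pow_rr T hcof x y
  have hrz := le_pow_rr T hcof x z
  have hsy := le_pow_rr T hcof y x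
  have hsz := le_pow_rr T hcof z x
  have g1 : rr T x t ≤ rr T x y + 1 := by
    refine rr_le T (hty.trans ?_)
    rw [pow_succ_apply']
    exact T.le_iff_le.mpr hry
  have g2 : rr T t x ≤ rr T y x := rr_le T (hsy.trans (pow_mono T _ hyt))
  have g3 : rr T x t ≤ rr T x z := rr_le T (htz.trans hrz)
  have g4 : rr T t x ≤ rr T z x + 1 := by
    refine rr_le T ?_
    rw [pow_succ_apply]
    exact hsz.trans (pow_mono T _ hzt)
  -- forced profiles: rr x z = rr x y + 1 and rr z x + 1 = rr y x
  have er : rr T x z = rr T x y + 1 := by omega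
  have es : rr T z x + 1 = rr T y x := by omega
  rw [er] at hrz
  rw [← es] at hsy
  obtain ⟨u, hu, hu1, hu2⟩ := constr_mixed T hinc hcof x y z (rr T x y) (rr T z x)
    (hyt.trans htz) hry hrz hsz hsy (hzt.trans (T.le_iff_le.mpr hty))
  exact finish T hinc hcof x y z u n (by omega) hdy hdz (by omega) hu1 hu2

/-- Quadrangle condition when both `y` and `z` are below `t`. -/
lemma quad_up (x y z t : L) (n : ℕ) (hn : 2 ≤ n)
    (hdy : (stepGraph T).dist x y = n) (hdz : (stepGraph T).dist x z = n)
    (hdt : (stepGraph T).dist x t = n + 1)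
    (hyt : y ≤ t) (hty : t ≤ T y) (hzt : z ≤ t) (htz : t ≤ T z) :
    ∃ v, (stepGraph T).dist x v = n - 1 ∧
      (stepGraph T).dist v y = 1 ∧ (stepGraph T).dist v z = 1 := by
  have e1 : rr T x y + rr T y x = n := by rw [← dist_eq T hinc hcof]; exact hdy
  have e2 : rr T x z + rr T z x = n := by rw [← dist_eq T hinc hcof]; exact hdz
  have e3 : rr T x t + rr T t x = n + 1 := by rw [← dist_eq T hinc hcof]; exact hdt
  have hry := le_pow_rr T hcof x y
  have hrz := le_pow_rr T hcof x z
  have hsy := le_pow_rr T hcof y x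
  have hsz := le_pow_rr T hcof z x
  have g1 : rr T x t ≤ rr T x y + 1 := by
    refine rr_le T (hty.trans ?_)
    rw [pow_succ_apply']
    exact T.le_iff_le.mpr hry
  have g2 : rr T t x ≤ rr T y x := rr_le T (hsy.trans (pow_mono T _ hyt))
  have g1' : rr T x t ≤ rr T x z + 1 := by
    refine rr_le T (htz.trans ?_)
    rw [pow_succ_apply']
    exact T.le_iff_le.mpr hrz
  have g2' : rr T t x ≤ rr T z x := rr_le T (hsz.trans (pow_mono T _ hzt))
  -- y and z must be strictly below t in both cases
  have f1 : rr T x y ≤ rr T x t := rr_le T (hyt.trans (le_pow_rr T hcof x t))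
  have f1' : rr T x z ≤ rr T x t := rr_le T (hzt.trans (le_pow_rr T hcof x t))
  have er : rr T x z = rr T x y := by omega
  have es : rr T z x = rr T y x := by omega
  exact same_profile T hinc hcof x y z n hn hdy hdz er es
    (hyt.trans htz) (hzt.trans hty)

/-- Quadrangle condition when both `y` and `z` are above `t`. -/
lemma quad_down (x y z t : L) (n : ℕ) (hn : 2 ≤ n)
    (hdy : (stepGraph T).dist x y = n) (hdz : (stepGraph T).dist x z = n)
    (hdt : (stepGraph T).dist x t = n + 1)
    (hty : t ≤ y) (hyt : y ≤ T t) (htz : t ≤ z) (hzt : z ≤ T t) :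
    ∃ v, (stepGraph T).dist x v = n - 1 ∧
      (stepGraph T).dist v y = 1 ∧ (stepGraph T).dist v z = 1 := by
  have e1 : rr T x y + rr T y x = n := by rw [← dist_eq T hinc hcof]; exact hdy
  have e2 : rr T x z + rr T z x = n := by rw [← dist_eq T hinc hcof]; exact hdz
  have e3 : rr T x t + rr T t x = n + 1 := by rw [← dist_eq T hinc hcof]; exact hdt
  have hry := le_pow_rr T hcof x y
  have hrz := le_pow_rr T hcof x z
  have hsy := le_pow_rr T hcof y x
  have hsz := le_pow_rr T hcof z x
  have g1 : rr T x t ≤ rr T x y := rr_le T (hty.trans hry)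
  have g2 : rr T t x ≤ rr T y x + 1 := by
    refine rr_le T ?_
    rw [pow_succ_apply]
    exact hsy.trans (pow_mono T _ hyt)
  have g1' : rr T x t ≤ rr T x z := rr_le T (htz.trans hrz)
  have g2' : rr T t x ≤ rr T z x + 1 := by
    refine rr_le T ?_
    rw [pow_succ_apply]
    exact hsz.trans (pow_mono T _ hzt)
  have f2 : rr T y x ≤ rr T t x := rr_le T ((le_pow_rr T hcof t x).trans (pow_mono T _ hty))
  have f2' : rr T z x ≤ rr T t x := rr_le T ((le_pow_rr T hcof t x).trans (pow_mono T _ htz))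
  have er : rr T x z = rr T x y := by omega
  have es : rr T z x = rr T y x := by omega
  exact same_profile T hinc hcof x y z n hn hdy hdz er es
    (hyt.trans (T.le_iff_le.mpr htz)) (hzt.trans (T.le_iff_le.mpr hty))

end Main

end StepGraphAux

/-- Theorem 3.1. The graph `X` on `L` is weakly modular: it satisfies
the triangle condition and the quadrangle condition at every vertex, for every `n ≥ 2`. -/
theorem stepGraph_weakly_modular {L : Type*} [Lattice L] (T : L ≃o L)
    (hjoin : ∀ S : Set L, S.Nonempty → BddAbove S → ∃ j, IsLUB S j)
    (hinc : ∀ x : L, x < T x)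
    (hcof : ∀ x y : L, ∃ k : ℕ, (T ^ (k : ℤ))⁻¹ x ≤ y ∧ y ≤ (T ^ (k : ℤ)) x) :
    (∀ (x : L) (n : ℕ), 2 ≤ n → ∀ y z : L, (stepGraph T).Adj y z →
        (stepGraph T).dist x y = n → (stepGraph T).dist x z = n →
        ∃ u, (stepGraph T).dist x u = n - 1 ∧
          (stepGraph T).dist u y = 1 ∧ (stepGraph T).dist u z = 1) ∧
    (∀ (x : L) (n : ℕ), 2 ≤ n → ∀ y z t : L,
        (stepGraph T).dist x y = n → (stepGraph T).dist x z = n →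
        (stepGraph T).Adj y t → (stepGraph T).Adj z t → (stepGraph T).dist x t = n + 1 →
        ∃ u, (stepGraph T).dist x u = n - 1 ∧
          (stepGraph T).dist u y = 1 ∧ (stepGraph T).dist u z = 1) := by
  open StepGraphAux in
  constructor
  · -- triangle condition
    rintro x n hn y z ⟨-, hadj⟩ hdy hdz
    rcases hadj with ⟨hyz, hzy⟩ | ⟨hzy, hyz⟩
    · exact triangle_ordered T hinc hcof x y z n hn hyz hzy hdy hdz
    · obtain ⟨v, hv, hv1, hv2⟩ :=
        triangle_ordered T hinc hcof x z y n hn hzy hyz hdz hdy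
      exact ⟨v, hv, hv2, hv1⟩
  · -- quadrangle condition
    rintro x n hn y z t hdy hdz ⟨-, hyt⟩ ⟨-, hzt⟩ hdt
    rcases hyt with ⟨hyt, hty⟩ | ⟨hty, hyt⟩ <;> rcases hzt with ⟨hzt, htz⟩ | ⟨htz, hzt⟩
    · -- y ≤ t ≤ Ty and z ≤ t ≤ Tz
      exact quad_up T hinc hcof x y z t n hn hdy hdz hdt hyt hty hzt htz
    · -- y ≤ t ≤ Ty and t ≤ z ≤ Tt
      exact quad_mixed T hinc hcof x y z t n hn hdy hdz hdt hyt hty htz hzt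
    · -- t ≤ y ≤ Tt and z ≤ t ≤ Tz
      obtain ⟨v, hv, hv1, hv2⟩ :=
        quad_mixed T hinc hcof x z y t n hn hdz hdy hdt hzt htz hty hyt
      exact ⟨v, hv, hv2, hv1⟩
    · -- t ≤ y and t ≤ z
      exact quad_down T hinc hcof x y z t n hn hdy hdz hdt hty hyt htz hzt
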